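/- arXiv:1708.03283 — 2 statements merged into one kernel-verified Lean document; each statement's English description precedes it below -/
import Mathlib

section
/- Let a and b be odd positive integers with a < b and b - a ≡ 2 (mod 4), and set β_1 = a/2 and β_2 = b/2. Let A be the 4×4 real symmetric tridiagonal matrix with zero diagonal and off-diagonal entries A_{1,2} = A_{3,4} = √(β_1 β_2) and A_{2,3} = β_2 - β_1. Then the eigenvalues of A are -β_2, -β_1, β_1, β_2, and A admits perfect state transfer from vertex 1 to vertex 4 at time π, i.e., |(e^{iπA})_{1,4}| = 1. -/
open Matrix Polynomial

/-- `|(e^{itH})_{j,k}|` for a real symmetric Hamiltonian `H`. -/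
noncomputable def transferAmp (n : ℕ) (H : Matrix (Fin n) (Fin n) ℝ) (t : ℝ) (j k : Fin n) : ℝ :=
  ‖NormedSpace.exp ((Complex.I * (t : ℂ)) • H.map (fun x => (x : ℂ))) j k‖

lemma charpoly_lemma (β₁ β₂ s : ℝ) (hs : s^2 = β₁*β₂) :
    (!![0, s, 0, 0; s, 0, β₂ - β₁, 0; 0, β₂ - β₁, 0, s; 0, 0, s, 0] :
        Matrix (Fin 4) (Fin 4) ℝ).charpoly
      = (X + C β₂) * (X + C β₁) * (X - C β₁) * (X - C β₂) := by
  have key : (C s)^2 = C β₁ * C β₂ := by rw [← C_mul, ← C_pow, hs]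
  rw [Matrix.charpoly,
    show charmatrix (!![0, s, 0, 0; s, 0, β₂ - β₁, 0; 0, β₂ - β₁, 0, s; 0, 0, s, 0] :
          Matrix (Fin 4) (Fin 4) ℝ)
      = !![X, -C s, 0, 0; -C s, X, -C (β₂-β₁), 0; 0, -C (β₂-β₁), X, -C s; 0, 0, -C s, X] from by
      refine Matrix.ext fun i j => ?_
      fin_cases i <;> fin_cases j <;>
        simp [charmatrix_apply, Matrix.one_apply, Matrix.vecHead, Matrix.vecTail]]
  simp [Matrix.det_succ_row_zero, Fin.sum_univ_succ, Fin.succAbove]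
  linear_combination (((C s)^2 + C β₁ * C β₂) - 2*X^2) * key

set_option maxHeartbeats 1000000 in
lemma exp_entry (p q : ℂ) (hsum : p^2 + q^2 ≠ 0)
    (M : Matrix (Fin 4) (Fin 4) ℂ)
    (hM : M = (Complex.I * (Real.pi : ℂ)) •
      !![0, p*q, 0, 0; p*q, 0, q^2 - p^2, 0; 0, q^2 - p^2, 0, p*q; 0, 0, p*q, 0]) :
    NormedSpace.exp M 0 3 =
      (Complex.exp (Complex.I * (Real.pi : ℂ) * q^2)
        - Complex.exp (-(Complex.I * (Real.pi : ℂ) * q^2))) * p^2 / (2*(p^2+q^2))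
      - (Complex.exp (Complex.I * (Real.pi : ℂ) * p^2)
        - Complex.exp (-(Complex.I * (Real.pi : ℂ) * p^2))) * q^2 / (2*(p^2+q^2)) := by
  have h2 : (2:ℂ)*(p^2+q^2) ≠ 0 := by
    simp only [mul_ne_zero_iff]; exact ⟨two_ne_zero, hsum⟩
  set π' : ℂ := (Real.pi : ℂ) with hπ
  set P : Matrix (Fin 4) (Fin 4) ℂ :=
    !![p, q, q, p; q, p, -p, -q; q, -p, -p, q; p, -q, q, -p] with hP
  set Q : Matrix (Fin 4) (Fin 4) ℂ := ((2*(p^2+q^2))⁻¹) • P with hQ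
  set v : Fin 4 → ℂ := ![Complex.I*π'*q^2, Complex.I*π'*p^2, -(Complex.I*π'*p^2),
    -(Complex.I*π'*q^2)] with hv
  have hPQ : P * Q = 1 := by
    rw [hQ, Matrix.mul_smul]
    have hPP : P * P = (2*(p^2+q^2)) • (1 : Matrix (Fin 4) (Fin 4) ℂ) := by
      ext i j
      fin_cases i <;> fin_cases j <;>
        simp [hP, Matrix.mul_apply, Fin.sum_univ_four, Matrix.one_apply] <;> ring
    rw [hPP, smul_smul, inv_mul_cancel₀ h2, one_smul]
  have hQP : Q * P = 1 := mul_eq_one_comm.mp hPQ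
  have hMP : M * P = P * Matrix.diagonal v := by
    ext i j
    fin_cases i <;> fin_cases j <;>
      simp [hM, hP, hv, Matrix.mul_apply, Fin.sum_univ_four, Matrix.diagonal] <;> ring
  have hMdec : M = P * Matrix.diagonal v * Q := by
    calc M = M * (P * Q) := by rw [hPQ, Matrix.mul_one]
    _ = (M * P) * Q := by rw [Matrix.mul_assoc]
    _ = P * Matrix.diagonal v * Q := by rw [hMP]
  have hinv : P⁻¹ = Q := Matrix.inv_eq_right_inv hPQ
  have hunit : IsUnit P := ⟨⟨P, Q, hPQ, hQP⟩, rfl⟩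
  have hexp : NormedSpace.exp M = P * NormedSpace.exp (Matrix.diagonal v) * Q := by
    rw [hMdec, ← hinv, Matrix.exp_conj P _ hunit, hinv]
  have hexpD : NormedSpace.exp (Matrix.diagonal v)
      = Matrix.diagonal (fun k => Complex.exp (v k)) := by
    rw [Matrix.exp_diagonal, Pi.exp_def, Complex.exp_eq_exp_ℂ]
  have hD : Matrix.diagonal (fun k => Complex.exp (v k)) =
      !![Complex.exp (Complex.I*π'*q^2), 0, 0, 0;
         0, Complex.exp (Complex.I*π'*p^2), 0, 0;
         0, 0, Complex.exp (-(Complex.I*π'*p^2)), 0;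
         0, 0, 0, Complex.exp (-(Complex.I*π'*q^2))] := by
    ext i j
    fin_cases i <;> fin_cases j <;>
      simp [hv, Matrix.diagonal_apply, Matrix.vecHead, Matrix.vecTail]
  rw [hexp, hexpD, hD]
  simp [hP, hQ, Matrix.mul_apply, Fin.sum_univ_four]
  field_simp
  ring

lemma half_odd_diff (m : ℤ) (z : ℂ) (hz : z = (2*(m:ℂ)+1)/2) :
    Complex.exp (Complex.I * (Real.pi:ℂ) * z)
      - Complex.exp (-(Complex.I * (Real.pi:ℂ) * z)) = 2*Complex.I*(-1:ℂ)^m := by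
  have hE : Complex.exp (Complex.I * (Real.pi:ℂ) * z) = (-1:ℂ)^m * Complex.I := by
    have e1 : Complex.I * (Real.pi:ℂ) * z
        = (m:ℂ)*((Real.pi:ℂ)*Complex.I) + ((Real.pi/2 : ℝ):ℂ)*Complex.I := by
      rw [hz]; push_cast; ring
    rw [e1, Complex.exp_add, Complex.exp_int_mul, Complex.exp_pi_mul_I,
      Complex.exp_mul_I, ← Complex.ofReal_cos, ← Complex.ofReal_sin,
      Real.cos_pi_div_two, Real.sin_pi_div_two]
    simp
  rw [Complex.exp_neg, hE]
  rcases Int.even_or_odd m with he | ho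
  · rw [he.neg_one_zpow]; simp [Complex.inv_I]; ring
  · rw [ho.neg_one_zpow]
    rw [show ((-1:ℂ)*Complex.I)⁻¹ = Complex.I from by
      rw [neg_one_mul, inv_neg, Complex.inv_I, neg_neg]]
    ring

/-- For odd positive integers `a < b` with `b - a ≡ 2 (mod 4)`, setting `β₁ = a/2`,
`β₂ = b/2`, the weighted path on 4 vertices with edge weights
`√(β₁β₂), β₂ - β₁, √(β₁β₂)` has eigenvalues `-β₂, -β₁, β₁, β₂` and admits PST
from vertex 1 to vertex 4 at time `π`. -/
theorem pst_path_four (a b : ℤ) (ha : Odd a) (hb : Odd b) (hapos : 0 < a) (hbpos : 0 < b)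
    (hab : a < b) (hmod : (b - a) % 4 = 2) (β₁ β₂ : ℝ)
    (hβ₁ : β₁ = (a : ℝ) / 2) (hβ₂ : β₂ = (b : ℝ) / 2)
    (A : Matrix (Fin 4) (Fin 4) ℝ)
    (hA : A = !![0, Real.sqrt (β₁ * β₂), 0, 0;
                 Real.sqrt (β₁ * β₂), 0, β₂ - β₁, 0;
                 0, β₂ - β₁, 0, Real.sqrt (β₁ * β₂);
                 0, 0, Real.sqrt (β₁ * β₂), 0]) :
    A.charpoly = (X + C β₂) * (X + C β₁) * (X - C β₁) * (X - C β₂) ∧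
      transferAmp 4 A Real.pi 0 3 = 1 := by
  obtain ⟨k, hk⟩ := ha
  obtain ⟨m, hm⟩ := hb
  have hβ₁pos : 0 < β₁ := by
    rw [hβ₁]
    have : (0:ℝ) < (a:ℝ) := by exact_mod_cast hapos
    linarith
  have hβ₂pos : 0 < β₂ := by
    rw [hβ₂]
    have : (0:ℝ) < (b:ℝ) := by exact_mod_cast hbpos
    linarith
  set p : ℝ := Real.sqrt β₁ with hpdef
  set q : ℝ := Real.sqrt β₂ with hqdef
  have hppos : 0 < p := Real.sqrt_pos.mpr hβ₁pos
  have hqpos : 0 < q := Real.sqrt_pos.mpr hβ₂pos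
  have hp2 : p^2 = β₁ := Real.sq_sqrt hβ₁pos.le
  have hq2 : q^2 = β₂ := Real.sq_sqrt hβ₂pos.le
  have hsqrt : Real.sqrt (β₁ * β₂) = p * q := Real.sqrt_mul hβ₁pos.le β₂
  constructor
  · rw [hA, hsqrt]
    exact charpoly_lemma β₁ β₂ (p*q) (by rw [mul_pow, hp2, hq2])
  · -- PST part
    have hcp2 : ((p:ℂ))^2 = ((β₁:ℝ):ℂ) := by exact_mod_cast congrArg (fun x : ℝ => (x:ℂ)) hp2
    have hcq2 : ((q:ℂ))^2 = ((β₂:ℝ):ℂ) := by exact_mod_cast congrArg (fun x : ℝ => (x:ℂ)) hq2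
    have hsum : ((p:ℂ))^2 + ((q:ℂ))^2 ≠ 0 := by
      rw [hcp2, hcq2, ← Complex.ofReal_add]
      exact Complex.ofReal_ne_zero.mpr (by linarith)
    have hmap : (Complex.I * ((Real.pi : ℝ):ℂ)) • A.map (fun x => (x : ℂ))
        = (Complex.I * ((Real.pi:ℝ):ℂ)) •
          !![0, (p:ℂ)*(q:ℂ), 0, 0; (p:ℂ)*(q:ℂ), 0, (q:ℂ)^2 - (p:ℂ)^2, 0;
             0, (q:ℂ)^2 - (p:ℂ)^2, 0, (p:ℂ)*(q:ℂ); 0, 0, (p:ℂ)*(q:ℂ), 0] := by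
      congr 1
      refine Matrix.ext fun i j => ?_
      fin_cases i <;> fin_cases j <;>
        simp [hA, hsqrt, Matrix.map_apply, hcp2, hcq2, Matrix.vecHead, Matrix.vecTail] <;>
        push_cast <;> ring
    have hq2c : ((q:ℂ))^2 = (2*(m:ℂ)+1)/2 := by
      rw [hcq2, hβ₂, hm]; push_cast; ring
    have hp2c : ((p:ℂ))^2 = (2*(k:ℂ)+1)/2 := by
      rw [hcp2, hβ₁, hk]; push_cast; ring
    have hkm : (-1:ℂ)^k = -(-1:ℂ)^m := by
      have hodd : Odd (k - m) := by
        rw [Int.odd_iff]; omega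
      calc (-1:ℂ)^k = (-1:ℂ)^(m + (k-m)) := by norm_num
      _ = (-1:ℂ)^m * (-1:ℂ)^(k-m) := zpow_add₀ (by norm_num) _ _
      _ = -(-1:ℂ)^m := by rw [hodd.neg_one_zpow]; ring
    rw [transferAmp, exp_entry (p:ℂ) (q:ℂ) hsum _ hmap]
    rw [half_odd_diff m _ hq2c, half_odd_diff k _ hp2c, hkm]
    have : 2*Complex.I*(-1:ℂ)^m * (p:ℂ)^2 / (2*((p:ℂ)^2+(q:ℂ)^2))
        - 2*Complex.I*(-(-1:ℂ)^m) * (q:ℂ)^2 / (2*((p:ℂ)^2+(q:ℂ)^2))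
        = Complex.I * (-1:ℂ)^m := by
      field_simp
      ring
    rw [this]
    rw [norm_mul, Complex.norm_I, one_mul, norm_zpow]
    simp
end

section
/- Let β_1 be an odd positive integer and β_2 an even positive integer with β_1 < β_2. Let A be the 5×5 real symmetric tridiagonal matrix with zero diagonal and off-diagonal entries A_{1,2} = A_{4,5} = β_1 and A_{2,3} = A_{3,4} = √((β_2² - β_1²)/2). Then the eigenvalues of A are -β_2, -β_1, 0, β_1, β_2, and A admits perfect state transfer from vertex 1 to vertex 5 at time π, i.e., |(e^{iπA})_{1,5}| = 1. -/
open Matrix Polynomial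


/-- Matrix of (unnormalized-by-construction, actually orthonormal) eigenvectors. -/
noncomputable def Qmat (b1 b2 c : ℝ) : Matrix (Fin 5) (Fin 5) ℝ :=
  !![b1/(2*b2), 1/2, c/b2, 1/2, b1/(2*b2);
     -(1/2), -(1/2), 0, 1/2, 1/2;
     c/b2, 0, -(b1/b2), 0, c/b2;
     -(1/2), 1/2, 0, -(1/2), 1/2;
     b1/(2*b2), -(1/2), c/b2, -(1/2), b1/(2*b2)]

set_option maxHeartbeats 1000000 in
lemma orth_fact (b1 b2 c : ℝ) (hb2 : b2 ≠ 0) (hc2 : c^2 = (b2^2-b1^2)/2) :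
    Qmat b1 b2 c * (Qmat b1 b2 c)ᵀ = 1 := by
  ext i j
  simp only [Qmat, Matrix.mul_apply, Matrix.transpose_apply, Fin.sum_univ_five]
  fin_cases i <;> fin_cases j <;>
    simp [Matrix.one_apply, Matrix.vecHead, Matrix.vecTail] <;>
    (try field_simp) <;>
    (try ring) <;>
    (try linear_combination (256*b2^4) * hc2) <;>
    (try linear_combination 2 * hc2) <;>
    (try linear_combination 4 * hc2)

set_option maxHeartbeats 1000000 in
lemma diag_fact (b1 b2 c : ℝ) (hb2 : b2 ≠ 0) :
    Qmat b1 b2 c * (Matrix.diagonal ![-b2, -b1, 0, b1, b2] : Matrix (Fin 5) (Fin 5) ℝ) *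
      (Qmat b1 b2 c)ᵀ =
    !![0, b1, 0, 0, 0;
       b1, 0, c, 0, 0;
       0, c, 0, c, 0;
       0, 0, c, 0, b1;
       0, 0, 0, b1, 0] := by
  ext i j
  simp only [Qmat, Matrix.mul_apply, Matrix.transpose_apply, Matrix.diagonal_apply,
    Fin.sum_univ_five]
  fin_cases i <;> fin_cases j <;>
    simp [Matrix.vecHead, Matrix.vecTail] <;>
    (try field_simp) <;> (try ring)

set_option maxHeartbeats 1000000 in
lemma entry_fact (b1 b2 c : ℝ) (hb2 : b2 ≠ 0) (hc2 : c^2 = (b2^2-b1^2)/2) :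
    (Qmat b1 b2 c * (Matrix.diagonal ![1, -1, 1, -1, 1] : Matrix (Fin 5) (Fin 5) ℝ) *
      (Qmat b1 b2 c)ᵀ) 0 4 = 1 := by
  simp only [Qmat, Matrix.mul_apply, Matrix.transpose_apply, Matrix.diagonal_apply,
    Fin.sum_univ_five]
  simp [Matrix.vecHead, Matrix.vecTail]
  field_simp
  linear_combination 4 * hc2

lemma charpoly_conj_orth {n : ℕ} (Q D : Matrix (Fin n) (Fin n) ℝ) (h : Q * Qᵀ = 1) :
    (Q * D * Qᵀ).charpoly = D.charpoly := by
  classical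
  set f := (C : ℝ →+* ℝ[X]) with hf
  have hQ' : Q.map f * (Qᵀ).map f = 1 := by
    rw [← Matrix.map_mul, h, Matrix.map_one f (map_zero f) (map_one f)]
  have key : charmatrix (Q * D * Qᵀ) = Q.map f * charmatrix D * (Qᵀ).map f := by
    unfold charmatrix
    rw [Matrix.mul_sub, Matrix.sub_mul]
    congr 1
    · have hcomm := (Matrix.scalar_commute (n := Fin n) (X : ℝ[X])
        (fun r' => Commute.all _ _) (Q.map f)).eq
      rw [← hcomm, Matrix.mul_assoc, hQ', Matrix.mul_one]
    · simp only [RingHom.mapMatrix_apply, Matrix.map_mul, hf]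
  rw [Matrix.charpoly, key, Matrix.det_mul, Matrix.det_mul, Matrix.charpoly]
  have hdet : (Q.map f).det * ((Qᵀ).map f).det = 1 := by
    rw [← Matrix.det_mul, hQ', Matrix.det_one]
  calc (Q.map f).det * (charmatrix D).det * ((Qᵀ).map f).det
      = (charmatrix D).det * ((Q.map f).det * ((Qᵀ).map f).det) := by ring
    _ = (charmatrix D).det := by rw [hdet, mul_one]

lemma charpoly_diagonal_five (d : Fin 5 → ℝ) :
    (Matrix.diagonal d).charpoly =
      (X - C (d 0)) * (X - C (d 1)) * (X - C (d 2)) * (X - C (d 3)) * (X - C (d 4)) := by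
  classical
  have hcm : charmatrix (Matrix.diagonal d) = Matrix.diagonal (fun i => X - C (d i)) := by
    ext i j
    by_cases hij : i = j
    · subst hij; simp
    · simp [hij, Matrix.diagonal_apply_ne _ hij]
  rw [Matrix.charpoly, hcm, Matrix.det_diagonal, Fin.prod_univ_five]

set_option maxHeartbeats 1000000 in
/-- For an odd positive integer `β₁` and an even positive integer `β₂` with `β₁ < β₂`,
the weighted path on 5 vertices with edge weights
`β₁, √((β₂² - β₁²)/2), √((β₂² - β₁²)/2), β₁` has eigenvalues `-β₂, -β₁, 0, β₁, β₂`
and admits PST from vertex 1 to vertex 5 at time `π`. -/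
theorem pst_path_five (β₁ β₂ : ℤ) (h₁ : Odd β₁) (h₂ : Even β₂) (h₁pos : 0 < β₁)
    (h₂pos : 0 < β₂) (hlt : β₁ < β₂)
    (A : Matrix (Fin 5) (Fin 5) ℝ)
    (hA : A = !![0, (β₁ : ℝ), 0, 0, 0;
                 (β₁ : ℝ), 0, Real.sqrt (((β₂ : ℝ) ^ 2 - (β₁ : ℝ) ^ 2) / 2), 0, 0;
                 0, Real.sqrt (((β₂ : ℝ) ^ 2 - (β₁ : ℝ) ^ 2) / 2), 0,
                   Real.sqrt (((β₂ : ℝ) ^ 2 - (β₁ : ℝ) ^ 2) / 2), 0;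
                 0, 0, Real.sqrt (((β₂ : ℝ) ^ 2 - (β₁ : ℝ) ^ 2) / 2), 0, (β₁ : ℝ);
                 0, 0, 0, (β₁ : ℝ), 0]) :
    A.charpoly = (X + C (β₂ : ℝ)) * (X + C (β₁ : ℝ)) * X * (X - C (β₁ : ℝ)) *
        (X - C (β₂ : ℝ)) ∧
      transferAmp 5 A Real.pi 0 4 = 1 := by
  have hb1pos : (0:ℝ) < (β₁:ℝ) := by exact_mod_cast h₁pos
  have hb2pos : (0:ℝ) < (β₂:ℝ) := by exact_mod_cast h₂pos
  have hblt : (β₁:ℝ) < (β₂:ℝ) := by exact_mod_cast hlt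
  have hb2 : ((β₂:ℝ)) ≠ 0 := ne_of_gt hb2pos
  have hnn : 0 ≤ ((β₂:ℝ)^2 - (β₁:ℝ)^2)/2 := by nlinarith
  have hc2 : (Real.sqrt (((β₂:ℝ)^2 - (β₁:ℝ)^2)/2))^2 = ((β₂:ℝ)^2 - (β₁:ℝ)^2)/2 :=
    Real.sq_sqrt hnn
  set b1 : ℝ := (β₁ : ℝ) with hb1def
  set b2 : ℝ := (β₂ : ℝ) with hb2def
  set c : ℝ := Real.sqrt ((b2^2 - b1^2)/2) with hcdef
  -- A as a conjugation
  have hAeq : A = Qmat b1 b2 c *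
      (Matrix.diagonal ![-b2, -b1, 0, b1, b2] : Matrix (Fin 5) (Fin 5) ℝ) * (Qmat b1 b2 c)ᵀ := by
    rw [diag_fact b1 b2 c hb2, hA]
  have hQ : Qmat b1 b2 c * (Qmat b1 b2 c)ᵀ = 1 := orth_fact b1 b2 c hb2 hc2
  constructor
  · rw [hAeq, charpoly_conj_orth _ _ hQ, charpoly_diagonal_five]
    simp only [Matrix.cons_val_zero, Matrix.cons_val_one, Matrix.head_cons]
    show (X - C (-b2)) * (X - C (-b1)) * (X - C 0) * (X - C b1) * (X - C b2) = _
    rw [map_neg, map_neg, map_zero]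
    ring
  · -- complex side
    set f := Complex.ofRealHom with hfdef
    set Qc : Matrix (Fin 5) (Fin 5) ℂ := (Qmat b1 b2 c).map f with hQc
    have hmap1 : Qc * Qcᵀ = 1 := by
      rw [hQc, ← Matrix.transpose_map, ← Matrix.map_mul, hQ,
        Matrix.map_one f (map_zero f) (map_one f)]
    have hUnit : IsUnit Qc := by
      have : Invertible Qc := invertibleOfRightInverse _ _ hmap1
      exact isUnit_of_invertible Qc
    have hinv : Qc⁻¹ = Qcᵀ := Matrix.inv_eq_right_inv hmap1
    set dc : Fin 5 → ℂ := ![-(b2:ℂ), -(b1:ℂ), 0, (b1:ℂ), (b2:ℂ)] with hdc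
    have hAc : A.map (fun x => (x:ℂ)) = Qc * Matrix.diagonal dc * Qcᵀ := by
      rw [hAeq]
      have : (fun x : ℝ => (x:ℂ)) = ⇑f := rfl
      have hfun : (fun m => (f ((![-b2, -b1, 0, b1, b2] : Fin 5 → ℝ) m) : ℂ)) = dc := by
        funext i
        fin_cases i <;> simp [hdc, hfdef]
      rw [this, Matrix.map_mul, Matrix.map_mul, Matrix.diagonal_map (map_zero f),
        Matrix.transpose_map, hfun]
    set r : ℂ := Complex.I * (Real.pi : ℂ) with hr
    have hsm : r • (A.map (fun x => (x:ℂ))) = Qc * Matrix.diagonal (fun i => r * dc i) * Qc⁻¹ := by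
      rw [hAc, hinv]
      have h1 : (fun i => r * dc i) = r • dc := rfl
      rw [h1, Matrix.diagonal_smul, Matrix.mul_smul, Matrix.smul_mul]
    have hexp : NormedSpace.exp (r • (A.map (fun x => (x:ℂ)))) =
        Qc * (Matrix.diagonal (![1, -1, 1, -1, 1] : Fin 5 → ℂ)) * Qcᵀ := by
      have hfun2 : (fun i => Complex.exp (r * dc i)) = (![1, -1, 1, -1, 1] : Fin 5 → ℂ) := by
        funext i
        fin_cases i
        · show Complex.exp (r * dc 0) = 1
          have h : r * dc 0 = ((-β₂ : ℤ) : ℂ) * ((Real.pi : ℂ) * Complex.I) := by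
            simp [hr, hdc, hb2def]; push_cast; ring
          rw [h, Complex.exp_int_mul, Complex.exp_pi_mul_I]
          exact Even.neg_one_zpow h₂.neg
        · show Complex.exp (r * dc 1) = -1
          have h : r * dc 1 = ((-β₁ : ℤ) : ℂ) * ((Real.pi : ℂ) * Complex.I) := by
            simp [hr, hdc, hb1def]; push_cast; ring
          rw [h, Complex.exp_int_mul, Complex.exp_pi_mul_I]
          exact Odd.neg_one_zpow h₁.neg
        · show Complex.exp (r * dc 2) = 1
          have h : r * dc 2 = 0 := by simp [hdc]
          rw [h, Complex.exp_zero]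
        · show Complex.exp (r * dc 3) = -1
          have h : r * dc 3 = ((β₁ : ℤ) : ℂ) * ((Real.pi : ℂ) * Complex.I) := by
            simp [hr, hdc, hb1def]; push_cast; ring
          rw [h, Complex.exp_int_mul, Complex.exp_pi_mul_I]
          exact Odd.neg_one_zpow h₁
        · show Complex.exp (r * dc 4) = 1
          have h : r * dc 4 = ((β₂ : ℤ) : ℂ) * ((Real.pi : ℂ) * Complex.I) := by
            simp [hr, hdc, hb2def]; push_cast; ring
          rw [h, Complex.exp_int_mul, Complex.exp_pi_mul_I]
          exact Even.neg_one_zpow h₂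
      rw [hsm, Matrix.exp_conj Qc _ hUnit, Matrix.exp_diagonal, hinv, Pi.exp_def]
      simp only [← Complex.exp_eq_exp_ℂ]
      rw [hfun2]
    have hmapdiag : Qc * (Matrix.diagonal (![1, -1, 1, -1, 1] : Fin 5 → ℂ)) * Qcᵀ =
        ((Qmat b1 b2 c * (Matrix.diagonal ![1, -1, 1, -1, 1] : Matrix (Fin 5) (Fin 5) ℝ) *
          (Qmat b1 b2 c)ᵀ)).map f := by
      have hfun3 : (fun m => (f ((![1, -1, 1, -1, 1] : Fin 5 → ℝ) m) : ℂ)) =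
          (![1, -1, 1, -1, 1] : Fin 5 → ℂ) := by
        funext i
        fin_cases i <;> simp [hfdef]
      rw [Matrix.map_mul, Matrix.map_mul, Matrix.diagonal_map (map_zero f),
        Matrix.transpose_map, hQc, hfun3]
    have hval : (Qmat b1 b2 c * (Matrix.diagonal ![1, -1, 1, -1, 1] :
        Matrix (Fin 5) (Fin 5) ℝ) * (Qmat b1 b2 c)ᵀ) 0 4 = 1 := entry_fact b1 b2 c hb2 hc2
    unfold transferAmp
    rw [show Complex.I * (Real.pi : ℂ) = r from rfl, hexp, hmapdiag]
    rw [Matrix.map_apply, hval]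
    simp
end
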